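/- Let N+ be a rooted binary phylogenetic network on a set of exactly 4 taxa {a,b,c,d} that is a T-quartet, with associated resolved quartet ab|cd (the quartet displayed on T_rd(N−)). Then every tree displayed on N+ has unrooted quartet topology ab|cd; equivalently, all displayed trees of N+ share the same resolved quartet topology. -/

import Mathlib

/-!
# Common framework

Finite directed multigraphs, undirected connectivity, numbers of connected
components, cut edges, subgraphs, blobs, blobs determined by leaf sets,
B-quartets, and quartets displayed via cut-edge separation.

A *network* is modelled as a finite directed multigraph (edge directions are
simply ignored for the undirected notions of connectivity, cut edges and
blobs).
-/

/-- A finite directed multigraph: finite types of nodes and of edges, with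
source and target maps. -/
structure MDigraph where
  V : Type
  E : Type
  finV : Finite V
  finE : Finite E
  src : E → V
  tgt : E → V

attribute [instance] MDigraph.finV MDigraph.finE

namespace MDigraph

section Basic

variable (G : MDigraph)

/-- One undirected step between `u` and `v` along an edge from the set `F`. -/
def Step (F : Set G.E) (u v : G.V) : Prop :=
  ∃ e ∈ F, (G.src e = u ∧ G.tgt e = v) ∨ (G.src e = v ∧ G.tgt e = u)

/-- Undirected reachability (an undirected path) using only edges in `F`. -/
def Conn (F : Set G.E) (u v : G.V) : Prop :=
  Relation.ReflTransGen (G.Step F) u v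

/-- One directed step from `u` to `v` along an edge from the set `F`. -/
def DStep (F : Set G.E) (u v : G.V) : Prop :=
  ∃ e ∈ F, G.src e = u ∧ G.tgt e = v

/-- Directed reachability (a directed path) using only edges in `F`. -/
def DConn (F : Set G.E) (u v : G.V) : Prop :=
  Relation.ReflTransGen (G.DStep F) u v

/-- `u` is above (ancestral to) `v`: there is a directed path from `u` to `v`. -/
def Above (u v : G.V) : Prop := G.DConn Set.univ u v

/-- In-degree of a node. -/
noncomputable def inDeg (v : G.V) : ℕ := Nat.card {e : G.E // G.tgt e = v}

/-- Out-degree of a node. -/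
noncomputable def outDeg (v : G.V) : ℕ := Nat.card {e : G.E // G.src e = v}

/-- Undirected degree of a node (a loop counts twice). -/
noncomputable def degree (v : G.V) : ℕ := G.inDeg v + G.outDeg v

/-- The number of connected components of the graph with node set `W` and edge
set the restriction to `W` of `F` (two nodes of `W` lie in the same connected
component iff they are joined by an undirected path). -/
noncomputable def numComponents (W : Set G.V) (F : Set G.E) : ℕ :=
  Nat.card (Quot (fun u v : W => G.Step {e ∈ F | G.src e ∈ W ∧ G.tgt e ∈ W} u.1 v.1))

/-- `v` lies on every directed path from `u` to `w`: there is no directed path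
from `u` to `w` all of whose nodes avoid `v`. -/
def OnEveryPath (v u w : G.V) : Prop :=
  ¬ (u ≠ v ∧ w ≠ v ∧
      Relation.ReflTransGen (fun a b => G.DStep Set.univ a b ∧ a ≠ v ∧ b ≠ v) u w)

end Basic

/-- A subgraph (subnetwork): a set of nodes together with a set of edges
joining them. -/
structure Subgraph (G : MDigraph) where
  verts : Set G.V
  edges : Set G.E
  src_mem : ∀ e ∈ edges, G.src e ∈ verts
  tgt_mem : ∀ e ∈ edges, G.tgt e ∈ verts

/-- The whole graph, as a subgraph of itself. -/
def top (G : MDigraph) : Subgraph G :=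
  ⟨Set.univ, Set.univ, fun _ _ => Set.mem_univ _, fun _ _ => Set.mem_univ _⟩

namespace Subgraph

variable {G : MDigraph}

/-- Containment of subgraphs. -/
def le (H K : Subgraph G) : Prop := H.verts ⊆ K.verts ∧ H.edges ⊆ K.edges

/-- The subgraph `H` is connected. -/
def IsConnected (H : Subgraph G) : Prop :=
  H.verts.Nonempty ∧ ∀ u ∈ H.verts, ∀ v ∈ H.verts, G.Conn H.edges u v

/-- Delete an edge from a subgraph. -/
def deleteEdge (H : Subgraph G) (e : G.E) : Subgraph G :=
  ⟨H.verts, H.edges \ {e}, fun e' he' => H.src_mem e' he'.1,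
    fun e' he' => H.tgt_mem e' he'.1⟩

/-- The number of connected components of a subgraph. -/
noncomputable def numComponents (H : Subgraph G) : ℕ :=
  G.numComponents H.verts H.edges

/-- `e` is a cut edge of the (sub)graph `H`: deleting it increases the number
of connected components. -/
def IsCutEdge (H : Subgraph G) (e : G.E) : Prop :=
  e ∈ H.edges ∧ H.numComponents < (H.deleteEdge e).numComponents

end Subgraph

variable {G : MDigraph}

/-- `B` is a blob of the network `H`: a maximal connected subnetwork of `H`
having no cut edges.  (A blob is *trivial* if it consists of a single node.) -/
def IsBlobIn (H B : Subgraph G) : Prop :=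
  B.le H ∧ B.IsConnected ∧ (∀ e, ¬ B.IsCutEdge e) ∧
    ∀ B' : Subgraph G, B'.le H → B'.IsConnected → (∀ e, ¬ B'.IsCutEdge e) →
      B.le B' → B'.le B

/-- `e` is a cut edge of the network `H` incident to the blob `B`: exactly one
of its endpoints is a node of `B`. -/
def IncidentCut (H B : Subgraph G) (e : G.E) : Prop :=
  H.IsCutEdge e ∧ Xor' (G.src e ∈ B.verts) (G.tgt e ∈ B.verts)

/-- The blob `B` of the network `H` is determined by the set `S` of leaf
labels: deletion of the cut edges of `H` incident to `B` leaves the nodes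
labelled by the elements of `S` in distinct connected components. -/
def DeterminesIn {X : Type} (H B : Subgraph G) (leaf : X → G.V) (S : Set X) : Prop :=
  ∀ s ∈ S, ∀ t ∈ S, s ≠ t →
    ¬ G.Conn {e ∈ H.edges | ¬ IncidentCut H B e} (leaf s) (leaf t)

/-- Four taxa form a B-quartet on the network `H`: some blob of `H` is
determined by them. -/
def BQuartetIn {X : Type} (H : Subgraph G) (leaf : X → G.V) (a b c d : X) : Prop :=
  ∃ B : Subgraph G, IsBlobIn H B ∧ DeterminesIn H B leaf ({a, b, c, d} : Set X)

/-- Some cut edge of `H` separates the taxa `p, q` from the taxa `r, s`: after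
its deletion `p, q` lie in one connected component and `r, s` in another.  For
a 4-taxon set `{p,q,r,s}` this says exactly that the (reduced unrooted) tree of
blobs of `H` displays the resolved quartet `pq|rs` (the edges of the tree of
blobs correspond exactly to the cut edges of the network, and suppressing
degree-2 nodes or contracting blobs does not affect which taxa a cut edge
separates). -/
def CutSep {X : Type} (H : Subgraph G) (leaf : X → G.V) (p q r s : X) : Prop :=
  ∃ e, H.IsCutEdge e ∧
    G.Conn (H.edges \ {e}) (leaf p) (leaf q) ∧
    G.Conn (H.edges \ {e}) (leaf r) (leaf s) ∧
    ¬ G.Conn (H.edges \ {e}) (leaf p) (leaf r)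

end MDigraph
open MDigraph in
/-- A rooted binary phylogenetic network on the taxon set `X`: a connected
directed acyclic graph whose node set consists of a root (in-degree 0,
out-degree 2), leaves (in-degree 1, out-degree 0) bijectively labelled by `X`,
tree nodes (in-degree 1, out-degree 2) and hybrid nodes (in-degree 2,
out-degree 1). -/
structure PhyloNetwork (X : Type) extends MDigraph where
  root : toMDigraph.V
  leaf : X → toMDigraph.V
  leaf_inj : Function.Injective leaf
  root_in : toMDigraph.inDeg root = 0
  root_out : toMDigraph.outDeg root = 2
  leaf_in : ∀ x, toMDigraph.inDeg (leaf x) = 1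
  leaf_out : ∀ x, toMDigraph.outDeg (leaf x) = 0
  internal : ∀ v, v ≠ root → (∀ x, v ≠ leaf x) →
      (toMDigraph.inDeg v = 1 ∧ toMDigraph.outDeg v = 2) ∨
      (toMDigraph.inDeg v = 2 ∧ toMDigraph.outDeg v = 1)
  acyclic : ∀ v, ¬ Relation.TransGen (toMDigraph.DStep Set.univ) v v
  conn : ∀ u v, toMDigraph.Conn Set.univ u v

namespace PhyloNetwork

open MDigraph

variable {X : Type} (N : PhyloNetwork X)

/-- The subnetwork of `N⁺` consisting of all nodes and edges ancestral to at
least one taxon in `Y`.  Since suppressing nodes of in- and out-degree 1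
affects neither blobs, nor cut edges, nor which sets of taxa they separate,
this subnetwork faithfully represents the induced network `N⁺_Y`. -/
def inducedSub (Y : Set X) : Subgraph N.toMDigraph where
  verts := {v | ∃ y ∈ Y, N.toMDigraph.Above v (N.leaf y)}
  edges := {e | ∃ y ∈ Y, N.toMDigraph.Above (N.toMDigraph.tgt e) (N.leaf y)}
  src_mem := by
    rintro e ⟨y, hy, h⟩
    exact ⟨y, hy, Relation.ReflTransGen.head ⟨e, Set.mem_univ e, rfl, rfl⟩ h⟩
  tgt_mem := by
    rintro e ⟨y, hy, h⟩
    exact ⟨y, hy, h⟩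

/-- `v` is a stable ancestor of the leaves: it is ancestral to every leaf and
lies on every directed path from the root to any leaf. -/
def IsStableAncestor (v : N.toMDigraph.V) : Prop :=
  (∀ x, N.toMDigraph.Above v (N.leaf x)) ∧
  ∀ x, N.toMDigraph.OnEveryPath v N.root (N.leaf x)

/-- `v` is the lowest stable ancestor (LSA) of the network: a stable ancestor
below all stable ancestors. -/
def IsLSA (v : N.toMDigraph.V) : Prop :=
  N.IsStableAncestor v ∧ ∀ u, N.IsStableAncestor u → N.toMDigraph.Above u v

/-- The number of cut edges of `N⁺` incident to the blob `B`. -/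
noncomputable def blobDeg (B : Subgraph N.toMDigraph) : ℕ :=
  Nat.card {e : N.toMDigraph.E // IncidentCut (top N.toMDigraph) B e}

/-- `B` is an `m`-blob of the rooted network `N⁺`: if the root is not in `B`
then `B` has exactly `m` incident cut edges, while if the root is in `B` then
`B` has exactly `m - 1` incident cut edges. -/
def IsMBlob (B : Subgraph N.toMDigraph) (m : ℕ) : Prop :=
  IsBlobIn (top N.toMDigraph) B ∧
    ((N.root ∈ B.verts ∧ m = N.blobDeg B + 1) ∨ (N.root ∉ B.verts ∧ m = N.blobDeg B))

end PhyloNetwork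

open MDigraph

/-- The subnetwork of `N⁺` displayed by the selection `σ` of kept edges: after
deleting the non-selected hybrid edges, retain only nodes and edges from which
a taxon is reachable by a directed path (within `σ`).  Suppressing degree-2
nodes changes no cut-edge or separation structure, so this subnetwork
faithfully represents the displayed tree. -/
def dispSub {X : Type} (N : PhyloNetwork X) (σ : Set N.toMDigraph.E) :
    Subgraph N.toMDigraph where
  verts := {w | ∃ x, N.toMDigraph.DConn σ w (N.leaf x)}
  edges := {e | e ∈ σ ∧ ∃ x, N.toMDigraph.DConn σ (N.toMDigraph.tgt e) (N.leaf x)}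
  src_mem := by
    rintro e ⟨hσ, x, hx⟩
    exact ⟨x, Relation.ReflTransGen.head ⟨e, hσ, rfl, rfl⟩ hx⟩
  tgt_mem := by
    rintro e ⟨hσ, x, hx⟩
    exact ⟨x, hx⟩

/-- `σ` is a selection of edges defining a displayed tree: it contains every
tree edge (an edge whose child is not a hybrid node), and for each hybrid node
exactly one of its two incoming hybrid edges. -/
def IsSelection {X : Type} (N : PhyloNetwork X) (σ : Set N.toMDigraph.E) : Prop :=
  (∀ e, N.toMDigraph.inDeg (N.toMDigraph.tgt e) ≠ 2 → e ∈ σ) ∧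
  (∀ v, N.toMDigraph.inDeg v = 2 → ∃! e, N.toMDigraph.tgt e = v ∧ e ∈ σ)


/-! ### Auxiliary lemmas for Statement 13 -/

namespace MDigraph

variable {G : MDigraph}

lemma Step.symm' {F : Set G.E} {u v : G.V} (h : G.Step F u v) : G.Step F v u := by
  obtain ⟨e, he, h⟩ := h; exact ⟨e, he, h.symm⟩

lemma conn_symm {F : Set G.E} {u v : G.V} (h : G.Conn F u v) : G.Conn F v u :=
  Relation.ReflTransGen.mono (r := Function.swap (G.Step F)) (p := G.Step F)
    (fun _ _ h => Step.symm' h) _ _ (Relation.reflTransGen_swap.mpr h)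

lemma conn_mono {F F' : Set G.E} (hF : F ⊆ F') {u v : G.V} (h : G.Conn F u v) :
    G.Conn F' u v :=
  Relation.ReflTransGen.mono (r := G.Step F) (p := G.Step F')
    (fun _ _ ⟨e, he, hh⟩ => ⟨e, hF he, hh⟩) _ _ h

/-- The relation whose quotient defines `numComponents`. -/
def crel (G : MDigraph) (W : Set G.V) (F : Set G.E) : W → W → Prop :=
  fun u v => G.Step {e ∈ F | G.src e ∈ W ∧ G.tgt e ∈ W} u.1 v.1

lemma numComponents_eq (W : Set G.V) (F : Set G.E) :
    G.numComponents W F = Nat.card (Quot (G.crel W F)) := rfl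

lemma conn_quot_mk_eq {W : Set G.V} {F S : Set G.E}
    (hS : ∀ e ∈ S, e ∈ F ∧ G.src e ∈ W ∧ G.tgt e ∈ W) {u v : G.V}
    (h : G.Conn S u v) (hu : u ∈ W) :
    ∃ hv : v ∈ W, Quot.mk (G.crel W F) ⟨u, hu⟩ = Quot.mk (G.crel W F) ⟨v, hv⟩ := by
  induction h with
  | refl => exact ⟨hu, rfl⟩
  | @tail b c h' step ih =>
    obtain ⟨hb, hmk⟩ := ih
    obtain ⟨e, heS, hor⟩ := step
    obtain ⟨heF, hsW, htW⟩ := hS e heS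
    have hc : c ∈ W := by
      rcases hor with ⟨h1, h2⟩ | ⟨h1, h2⟩
      · exact h2 ▸ htW
      · exact h1 ▸ hsW
    exact ⟨hc, hmk.trans (Quot.sound ⟨e, ⟨heF, hsW, htW⟩, hor⟩)⟩

lemma quot_mk_eq_conn {W : Set G.V} {F : Set G.E} {u v : W}
    (h : Quot.mk (G.crel W F) u = Quot.mk (G.crel W F) v) :
    G.Conn {e ∈ F | G.src e ∈ W ∧ G.tgt e ∈ W} u.1 v.1 := by
  have h' := Quot.eq.mp h
  clear h
  induction h' with
  | rel a b hab => exact Relation.ReflTransGen.single hab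
  | refl a => exact Relation.ReflTransGen.refl
  | symm a b _ ih => exact conn_symm ih
  | trans a b c _ _ ih1 ih2 => exact ih1.trans ih2

lemma not_cutEdge_of_conn (H : Subgraph G) {e : G.E} (heH : e ∈ H.edges)
    (hc : G.Conn (H.edges \ {e}) (G.src e) (G.tgt e)) : ¬ H.IsCutEdge e := by
  rintro ⟨-, hlt⟩
  set W := H.verts with hW
  have hS : ∀ e' ∈ H.edges \ {e},
      e' ∈ H.edges \ {e} ∧ G.src e' ∈ W ∧ G.tgt e' ∈ W :=
    fun e' he' => ⟨he', H.src_mem _ he'.1, H.tgt_mem _ he'.1⟩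
  have key : ∀ p q : W, G.crel W H.edges p q →
      Quot.mk (G.crel W (H.edges \ {e})) p = Quot.mk (G.crel W (H.edges \ {e})) q := by
    rintro ⟨p, hp⟩ ⟨q, hq⟩ ⟨e₀, ⟨he₀, hs, ht⟩, hor⟩
    by_cases h0 : e₀ = e
    · subst h0
      rcases hor with ⟨h1, h2⟩ | ⟨h1, h2⟩
      · subst h1; subst h2
        obtain ⟨hv, hmk⟩ := conn_quot_mk_eq hS hc hs
        exact hmk
      · subst h1; subst h2
        obtain ⟨hv, hmk⟩ := conn_quot_mk_eq hS hc hs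
        exact hmk.symm
    · exact Quot.sound ⟨e₀, ⟨⟨he₀, by simpa using h0⟩, hs, ht⟩, hor⟩
  let g : Quot (G.crel W H.edges) → Quot (G.crel W (H.edges \ {e})) :=
    Quot.lift (fun p => Quot.mk (G.crel W (H.edges \ {e})) p) key
  have hsurj : Function.Surjective g := by
    intro q
    induction q using Quot.ind with
    | _ w => exact ⟨Quot.mk _ w, rfl⟩
  have hle : Nat.card (Quot (G.crel W (H.edges \ {e}))) ≤
      Nat.card (Quot (G.crel W H.edges)) :=
    Nat.card_le_card_of_surjective g hsurj
  have h1 : H.numComponents = Nat.card (Quot (G.crel W H.edges)) := rfl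
  have h2 : (H.deleteEdge e).numComponents
      = Nat.card (Quot (G.crel W (H.edges \ {e}))) := rfl
  omega

lemma isCutEdge_of_conn_of_not_conn (H : Subgraph G) {e : G.E} {u v : G.V}
    (heH : e ∈ H.edges) (hu : u ∈ H.verts) (hv : v ∈ H.verts)
    (hconn : G.Conn H.edges u v) (hn : ¬ G.Conn (H.edges \ {e}) u v) :
    H.IsCutEdge e := by
  refine ⟨heH, ?_⟩
  set W := H.verts with hW
  have hmono : ∀ p q : W, G.crel W (H.edges \ {e}) p q → G.crel W H.edges p q := by
    rintro p q ⟨e₀, ⟨he₀, hs, ht⟩, hor⟩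
    exact ⟨e₀, ⟨he₀.1, hs, ht⟩, hor⟩
  let f : Quot (G.crel W (H.edges \ {e})) → Quot (G.crel W H.edges) :=
    Quot.lift (fun p => Quot.mk (G.crel W H.edges) p)
      (fun p q h => Quot.sound (hmono p q h))
  have hsurj : Function.Surjective f := by
    intro q
    induction q using Quot.ind with
    | _ w => exact ⟨Quot.mk _ w, rfl⟩
  have hle : Nat.card (Quot (G.crel W H.edges)) ≤
      Nat.card (Quot (G.crel W (H.edges \ {e}))) :=
    Nat.card_le_card_of_surjective f hsurj
  have h1 : H.numComponents = Nat.card (Quot (G.crel W H.edges)) := rfl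
  have h2 : (H.deleteEdge e).numComponents
      = Nat.card (Quot (G.crel W (H.edges \ {e}))) := rfl
  rw [h1, h2]
  refine lt_of_le_of_ne hle ?_
  intro heq
  have hbij : Function.Bijective f :=
    (Nat.bijective_iff_surjective_and_card f).mpr ⟨hsurj, heq.symm⟩
  have hSfull : ∀ e' ∈ H.edges, e' ∈ H.edges ∧ G.src e' ∈ W ∧ G.tgt e' ∈ W :=
    fun e' he' => ⟨he', H.src_mem _ he', H.tgt_mem _ he'⟩
  obtain ⟨hv', hmk⟩ := conn_quot_mk_eq hSfull hconn hu
  have hmk' : Quot.mk (G.crel W H.edges) ⟨u, hu⟩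
      = Quot.mk (G.crel W H.edges) ⟨v, hv⟩ := hmk
  have h3 : Quot.mk (G.crel W (H.edges \ {e})) ⟨u, hu⟩
      = Quot.mk (G.crel W (H.edges \ {e})) ⟨v, hv⟩ := hbij.1 hmk'
  have h4 := quot_mk_eq_conn h3
  exact hn (conn_mono (fun e' he' => he'.1) h4)

end MDigraph

namespace PhyloNetwork

open MDigraph

variable {X : Type} (N : PhyloNetwork X)

lemma wf_parent :
    WellFounded (fun p v : N.toMDigraph.V => N.toMDigraph.DStep Set.univ p v) := by
  have h1 : IsTrans N.toMDigraph.V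
      (Relation.TransGen (N.toMDigraph.DStep Set.univ)) :=
    ⟨fun _ _ _ h1 h2 => h1.trans h2⟩
  have h2 : IsIrrefl N.toMDigraph.V
      (Relation.TransGen (N.toMDigraph.DStep Set.univ)) := ⟨N.acyclic⟩
  exact Subrelation.wf (fun h => Relation.TransGen.single h)
    (Finite.wellFounded_of_trans_of_irrefl _)

lemma exists_tgt (v : N.toMDigraph.V) (hv : v ≠ N.root) :
    ∃ e, N.toMDigraph.tgt e = v := by
  have hpos : N.toMDigraph.inDeg v ≠ 0 := by
    by_cases hl : ∃ x, v = N.leaf x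
    · obtain ⟨x, rfl⟩ := hl; rw [N.leaf_in]; omega
    · push_neg at hl
      rcases N.internal v hv hl with ⟨h, -⟩ | ⟨h, -⟩ <;> omega
  have hne : Nat.card {e : N.toMDigraph.E // N.toMDigraph.tgt e = v} ≠ 0 := hpos
  obtain ⟨⟨e, he⟩⟩ := (Nat.card_ne_zero.mp hne).1
  exact ⟨e, he⟩

lemma exists_sel_tgt {σ : Set N.toMDigraph.E} (hσ : IsSelection N σ)
    (v : N.toMDigraph.V) (hv : v ≠ N.root) : ∃ e ∈ σ, N.toMDigraph.tgt e = v := by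
  obtain ⟨e, he⟩ := exists_tgt N v hv
  by_cases h2 : N.toMDigraph.inDeg v = 2
  · obtain ⟨e', ⟨he', hs⟩, -⟩ := hσ.2 v h2
    exact ⟨e', hs, he'⟩
  · exact ⟨e, hσ.1 e (by rw [he]; exact h2), he⟩

lemma root_dconn {σ : Set N.toMDigraph.E} (hσ : IsSelection N σ) :
    ∀ v, N.toMDigraph.DConn σ N.root v := by
  intro v
  induction v using (wf_parent N).induction with
  | _ x ih =>
    by_cases hx : x = N.root
    · subst hx; exact Relation.ReflTransGen.refl
    · obtain ⟨e, heσ, he⟩ := exists_sel_tgt N hσ x hx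
      have hp := ih (N.toMDigraph.src e) ⟨e, Set.mem_univ e, rfl, he⟩
      exact hp.tail ⟨e, heσ, rfl, he⟩

lemma conn_root_or (e : N.toMDigraph.E) :
    ∀ v, N.toMDigraph.Conn (Set.univ \ {e}) v N.root ∨
      N.toMDigraph.Conn (Set.univ \ {e}) v (N.toMDigraph.tgt e) := by
  intro v
  induction v using (wf_parent N).induction with
  | _ x ih =>
    by_cases hx : x = N.root
    · subst hx; exact Or.inl Relation.ReflTransGen.refl
    · by_cases hxt : x = N.toMDigraph.tgt e
      · subst hxt; exact Or.inr Relation.ReflTransGen.refl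
      · obtain ⟨e₀, he₀⟩ := exists_tgt N x hx
        have hne : e₀ ≠ e := by
          intro h; subst h; exact hxt he₀.symm
        have hstep : N.toMDigraph.Step (Set.univ \ {e}) x (N.toMDigraph.src e₀) :=
          ⟨e₀, ⟨Set.mem_univ _, by simpa using hne⟩, Or.inr ⟨rfl, he₀⟩⟩
        rcases ih (N.toMDigraph.src e₀) ⟨e₀, Set.mem_univ _, rfl, he₀⟩ with h | h
        · exact Or.inl (Relation.ReflTransGen.head hstep h)
        · exact Or.inr (Relation.ReflTransGen.head hstep h)

lemma conn_root_all {e e' : N.toMDigraph.E} (hne : e' ≠ e)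
    (het : N.toMDigraph.tgt e' = N.toMDigraph.tgt e) :
    ∀ v, N.toMDigraph.Conn (Set.univ \ {e}) v N.root := by
  intro v
  induction v using (wf_parent N).induction with
  | _ x ih =>
    by_cases hx : x = N.root
    · subst hx; exact Relation.ReflTransGen.refl
    · obtain ⟨e₁, he₁, hne₁⟩ : ∃ e₁, N.toMDigraph.tgt e₁ = x ∧ e₁ ≠ e := by
        by_cases hxt : x = N.toMDigraph.tgt e
        · exact ⟨e', by rw [het, hxt], hne⟩
        · obtain ⟨e₀, he₀⟩ := exists_tgt N x hx
          exact ⟨e₀, he₀, fun h => hxt (by rw [← he₀, h])⟩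
      have hstep : N.toMDigraph.Step (Set.univ \ {e}) x (N.toMDigraph.src e₁) :=
        ⟨e₁, ⟨Set.mem_univ _, by simpa using hne₁⟩, Or.inr ⟨rfl, he₁⟩⟩
      exact Relation.ReflTransGen.head hstep
        (ih (N.toMDigraph.src e₁) ⟨e₁, Set.mem_univ _, rfl, he₁⟩)

lemma not_hybrid_of_cut {e : N.toMDigraph.E}
    (hcut : (top N.toMDigraph).IsCutEdge e) :
    N.toMDigraph.inDeg (N.toMDigraph.tgt e) ≠ 2 := by
  intro h2
  have hcard : Nat.card {e' : N.toMDigraph.E //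
      N.toMDigraph.tgt e' = N.toMDigraph.tgt e} = 2 := h2
  haveI hnt : Nontrivial {e' : N.toMDigraph.E //
      N.toMDigraph.tgt e' = N.toMDigraph.tgt e} :=
    Finite.one_lt_card_iff_nontrivial.mp (by omega)
  obtain ⟨e'', hne''⟩ := exists_ne (⟨e, rfl⟩ : {e' : N.toMDigraph.E //
      N.toMDigraph.tgt e' = N.toMDigraph.tgt e})
  have hne : e''.1 ≠ e := fun h => hne'' (Subtype.ext h)
  have h1 := conn_root_all N hne e''.2 (N.toMDigraph.src e)
  have h2' := conn_root_all N hne e''.2 (N.toMDigraph.tgt e)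
  exact not_cutEdge_of_conn (top N.toMDigraph) (Set.mem_univ e)
    (h1.trans (conn_symm h2')) hcut

end PhyloNetwork

section DispLemmas

open MDigraph

variable {X : Type} (N : PhyloNetwork X) (σ : Set N.toMDigraph.E)

lemma dconn_conn_disp {u : N.toMDigraph.V} {x : X}
    (h : N.toMDigraph.DConn σ u (N.leaf x)) :
    N.toMDigraph.Conn (dispSub N σ).edges u (N.leaf x) := by
  induction h using Relation.ReflTransGen.head_induction_on with
  | refl => exact Relation.ReflTransGen.refl
  | head h' hrest ih =>
    obtain ⟨e₀, he₀, hsrc, htgt⟩ := h'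
    have heD : e₀ ∈ (dispSub N σ).edges := ⟨he₀, x, by rw [htgt]; exact hrest⟩
    exact Relation.ReflTransGen.head ⟨e₀, heD, Or.inl ⟨hsrc, htgt⟩⟩ ih

lemma dconn_conn_disp' (e : N.toMDigraph.E) {u : N.toMDigraph.V} {x : X}
    (h : N.toMDigraph.DConn σ u (N.leaf x)) :
    N.toMDigraph.Conn ((dispSub N σ).edges \ {e}) u (N.leaf x) ∨
      (e ∈ σ ∧ N.toMDigraph.DConn σ (N.toMDigraph.tgt e) (N.leaf x) ∧
        N.toMDigraph.Conn ((dispSub N σ).edges \ {e}) (N.toMDigraph.tgt e)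
          (N.leaf x)) := by
  induction h using Relation.ReflTransGen.head_induction_on with
  | refl => exact Or.inl Relation.ReflTransGen.refl
  | head h' hrest ih =>
    obtain ⟨e₀, he₀, hsrc, htgt⟩ := h'
    have heD : e₀ ∈ (dispSub N σ).edges := ⟨he₀, x, by rw [htgt]; exact hrest⟩
    rcases ih with hC | hR
    · by_cases h0 : e₀ = e
      · subst h0
        exact Or.inr ⟨he₀, by rw [htgt]; exact hrest, by rw [htgt]; exact hC⟩
      · exact Or.inl (Relation.ReflTransGen.head
          ⟨e₀, ⟨heD, by simpa using h0⟩, Or.inl ⟨hsrc, htgt⟩⟩ hC)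
    · exact Or.inr hR

end DispLemmas

/-- Let `N⁺` be a rooted binary phylogenetic network on exactly the four taxa
`{a,b,c,d}` that is a T-quartet, with associated resolved quartet `ab|cd`
(the quartet displayed on `T_rd(N⁻)`, i.e. some cut edge of the network
separates `a, b` from `c, d`).  Then every tree displayed on `N⁺` has
unrooted quartet topology `ab|cd`; equivalently, all displayed trees of `N⁺`
share the same resolved quartet topology. -/
theorem stmt_13 {X : Type} (N : PhyloNetwork X) (a b c d : X)
    (hX : ∀ x : X, x = a ∨ x = b ∨ x = c ∨ x = d)
    (hpair : List.Pairwise (· ≠ ·) [a, b, c, d])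
    (hT : ¬ BQuartetIn (top N.toMDigraph) N.leaf a b c d)
    (hq : CutSep (top N.toMDigraph) N.leaf a b c d)
    (σ : Set N.toMDigraph.E) (hσ : IsSelection N σ) :
    CutSep (dispSub N σ) N.leaf a b c d := by
  classical
  obtain ⟨e, hcut, hab, hcd, hac⟩ := hq
  have hab : N.toMDigraph.Conn (Set.univ \ {e}) (N.leaf a) (N.leaf b) := hab
  have hcd : N.toMDigraph.Conn (Set.univ \ {e}) (N.leaf c) (N.leaf d) := hcd
  have hac : ¬ N.toMDigraph.Conn (Set.univ \ {e}) (N.leaf a) (N.leaf c) := hac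
  have hnot2 := N.not_hybrid_of_cut hcut
  have heσ : e ∈ σ := hσ.1 e hnot2
  have hnst : ¬ N.toMDigraph.Conn (Set.univ \ {e}) (N.toMDigraph.src e)
      (N.toMDigraph.tgt e) :=
    fun h => not_cutEdge_of_conn (top N.toMDigraph) (Set.mem_univ e) h hcut
  have hdich := N.conn_root_or e
  have hsr : N.toMDigraph.Conn (Set.univ \ {e}) (N.toMDigraph.src e) N.root :=
    (hdich (N.toMDigraph.src e)).resolve_right hnst
  have hrt : ¬ N.toMDigraph.Conn (Set.univ \ {e}) N.root (N.toMDigraph.tgt e) :=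
    fun h => hnst (hsr.trans h)
  have hRT : ∀ v, ¬ (N.toMDigraph.Conn (Set.univ \ {e}) v N.root ∧
      N.toMDigraph.Conn (Set.univ \ {e}) v (N.toMDigraph.tgt e)) :=
    fun v ⟨h1, h2⟩ => hrt ((conn_symm h1).trans h2)
  have hsubU : (dispSub N σ).edges \ {e} ⊆ Set.univ \ {e} :=
    fun e' he' => ⟨Set.mem_univ _, he'.2⟩
  -- classification of leaves into root-side and tgt-side within the displayed tree
  have hRside : ∀ p : X, N.toMDigraph.Conn (Set.univ \ {e}) (N.leaf p) N.root →
      N.toMDigraph.Conn ((dispSub N σ).edges \ {e}) N.root (N.leaf p) := by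
    intro p hp
    rcases dconn_conn_disp' N σ e (N.root_dconn hσ (N.leaf p)) with h | h
    · exact h
    · exact absurd ⟨hp, conn_symm (conn_mono hsubU h.2.2)⟩ (hRT (N.leaf p))
  have hTside : ∀ p : X,
      N.toMDigraph.Conn (Set.univ \ {e}) (N.leaf p) (N.toMDigraph.tgt e) →
      N.toMDigraph.DConn σ (N.toMDigraph.tgt e) (N.leaf p) ∧
        N.toMDigraph.Conn ((dispSub N σ).edges \ {e}) (N.toMDigraph.tgt e)
          (N.leaf p) := by
    intro p hp
    rcases dconn_conn_disp' N σ e (N.root_dconn hσ (N.leaf p)) with h | h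
    · exact absurd ⟨conn_symm (conn_mono hsubU h), hp⟩ (hRT (N.leaf p))
    · exact ⟨h.2.1, h.2.2⟩
  have key : ∀ p q : X,
      N.toMDigraph.Conn (Set.univ \ {e}) (N.leaf p) (N.leaf q) →
      N.toMDigraph.Conn ((dispSub N σ).edges \ {e}) (N.leaf p) (N.leaf q) := by
    intro p q hpq
    rcases hdich (N.leaf p) with hp | hp
    · have hq' : N.toMDigraph.Conn (Set.univ \ {e}) (N.leaf q) N.root :=
        (hdich (N.leaf q)).resolve_right
          (fun h => hRT (N.leaf p) ⟨hp, hpq.trans h⟩)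
      exact (conn_symm (hRside p hp)).trans (hRside q hq')
    · have hq' : N.toMDigraph.Conn (Set.univ \ {e}) (N.leaf q)
          (N.toMDigraph.tgt e) :=
        (hdich (N.leaf q)).resolve_left
          (fun h => hRT (N.leaf p) ⟨hpq.trans h, hp⟩)
      exact (conn_symm (hTside p hp).2).trans (hTside q hq').2
  have hab2 := key a b hab
  have hcd2 := key c d hcd
  have hac2 : ¬ N.toMDigraph.Conn ((dispSub N σ).edges \ {e}) (N.leaf a)
      (N.leaf c) := fun h => hac (conn_mono hsubU h)
  have hTwit : ∃ x, N.toMDigraph.DConn σ (N.toMDigraph.tgt e) (N.leaf x) := by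
    rcases hdich (N.leaf c) with hc' | hc'
    · have ha' : N.toMDigraph.Conn (Set.univ \ {e}) (N.leaf a)
          (N.toMDigraph.tgt e) :=
        (hdich (N.leaf a)).resolve_left (fun h => hac (h.trans (conn_symm hc')))
      exact ⟨a, (hTside a ha').1⟩
    · exact ⟨c, (hTside c hc').1⟩
  obtain ⟨x₀, hx₀⟩ := hTwit
  have heD : e ∈ (dispSub N σ).edges := ⟨heσ, x₀, hx₀⟩
  have hva : N.leaf a ∈ (dispSub N σ).verts := ⟨a, Relation.ReflTransGen.refl⟩
  have hvc : N.leaf c ∈ (dispSub N σ).verts := ⟨c, Relation.ReflTransGen.refl⟩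
  have hconn_ac : N.toMDigraph.Conn (dispSub N σ).edges (N.leaf a) (N.leaf c) :=
    (conn_symm (dconn_conn_disp N σ (N.root_dconn hσ (N.leaf a)))).trans
      (dconn_conn_disp N σ (N.root_dconn hσ (N.leaf c)))
  have hcute : (dispSub N σ).IsCutEdge e :=
    isCutEdge_of_conn_of_not_conn (dispSub N σ) heD hva hvc hconn_ac hac2
  exact ⟨e, hcute, hab2, hcd2, hac2⟩
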